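/- Let (ψ_t)_{t>0} be a family of convex, monotone increasing functions ψ_t : [0,1] → [0,1] with ψ_t(1) = 1 and 0 < ψ_t(0), ψ_t(s) < 1 for s ∈ [0,1), each having a finite left derivative ψ_t'(1) > 0 at 1, satisfying ψ_{t+h} = ψ_t ∘ ψ_h and ψ_{t+h}'(1) = ψ_t'(1)·ψ_h'(1) for all t, h > 0. Suppose moreover that ψ_1 is twice continuously differentiable on [0,1] and that 0 < ψ_1'(1) < 1 (subcritical case with finite second moment). Then χ(0) := lim_{t→∞} (1 − ψ_t(0)) / ψ_t'(1) exists, is finite, and is strictly positive. -/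

import Mathlib

open Set Filter Topology

private lemma aux_tangent (f : ℝ → ℝ) (L : ℝ) (hconv : ConvexOn ℝ (Icc 0 1) f) (hf1 : f 1 = 1)
    (hd : HasDerivWithinAt f L (Iic 1) 1) :
    ∀ s ∈ Icc (0:ℝ) 1, 1 - L * (1 - s) ≤ f s := by
  intro s hs
  rcases eq_or_lt_of_le hs.2 with h1 | h1
  · simp [h1, hf1]
  have hslope : (f s - f 1) / (s - 1) ≤ L := by
    have htend : Tendsto (slope f 1) (𝓝[Iic 1 \ {1}] 1) (𝓝 L) :=
      hasDerivWithinAt_iff_tendsto_slope.mp hd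
    have hset : Iic (1:ℝ) \ {1} = Iio 1 := by
      ext x; simp [lt_iff_le_and_ne]
    rw [hset] at htend
    refine ge_of_tendsto htend ?_
    filter_upwards [Ioo_mem_nhdsLT_of_mem (by exact ⟨h1, le_rfl⟩ : (1:ℝ) ∈ Ioc s 1)] with x hx
    have hx0 : x ∈ Icc (0:ℝ) 1 := ⟨le_of_lt (lt_of_le_of_lt hs.1 hx.1), hx.2.le⟩
    have := hconv.secant_mono (a := 1) (x := s) (y := x)
      ⟨zero_le_one, le_rfl⟩ hs hx0 (ne_of_lt h1) (ne_of_lt hx.2) hx.1.le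
    rw [slope_def_field]
    exact this
  have hs1 : s - 1 < 0 := by linarith
  rw [div_le_iff_of_neg hs1] at hslope
  rw [hf1] at hslope
  nlinarith

private lemma aux_quad (f f' f'' : ℝ → ℝ) (m C : ℝ)
    (hf' : ∀ s ∈ Icc (0:ℝ) 1, HasDerivWithinAt f (f' s) (Icc 0 1) s)
    (hf'' : ∀ s ∈ Icc (0:ℝ) 1, HasDerivWithinAt f' (f'' s) (Icc 0 1) s)
    (hC : ∀ x ∈ Icc (0:ℝ) 1, ‖f'' x‖ ≤ C)
    (hm : f' 1 = m) (hf1 : f 1 = 1) :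
    ∀ s ∈ Icc (0:ℝ) 1, f s ≤ 1 - m * (1 - s) + C / 2 * (1 - s) ^ 2 := by
  have hlip : ∀ x ∈ Icc (0:ℝ) 1, m - C * (1 - x) ≤ f' x := by
    intro x hx
    have := (convex_Icc (0:ℝ) 1).norm_image_sub_le_of_norm_hasDerivWithin_le
      hf'' hC (x := x) (y := 1) hx ⟨zero_le_one, le_rfl⟩
    rw [Real.norm_eq_abs, Real.norm_eq_abs, abs_sub_le_iff, abs_of_nonneg (by linarith [hx.2])]
      at this
    linarith [this.2, hm ▸ this.1]
  set φ : ℝ → ℝ := fun x => f x - (1 - m * (1 - x) + C / 2 * (1 - x) ^ 2) with hφ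
  have hmono : MonotoneOn φ (Icc 0 1) := by
    have hint : interior (Icc (0:ℝ) 1) = Ioo 0 1 := interior_Icc
    apply monotoneOn_of_hasDerivWithinAt_nonneg (convex_Icc 0 1)
      (f' := fun x => f' x - (m - C * (1 - x)))
    · apply ContinuousOn.sub
      · exact fun s hs => (hf' s hs).continuousWithinAt
      · fun_prop
    · intro x hx
      rw [hint] at hx ⊢
      have h1x : HasDerivAt (fun y : ℝ => 1 - y) (-1) x := by
        simpa using (hasDerivAt_id x).const_sub 1
      have hp : HasDerivAt (fun y : ℝ => 1 - m * (1 - y) + C / 2 * (1 - y) ^ 2)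
          (m - C * (1 - x)) x := by
        have h2 : HasDerivAt (fun y : ℝ => 1 - m * (1 - y)) (-(m * -1)) x :=
          (h1x.const_mul m).const_sub 1
        have h3 : HasDerivAt (fun y : ℝ => C / 2 * (1 - y) ^ 2)
            (C / 2 * (2 * (1 - x) ^ 1 * -1)) x := (h1x.pow 2).const_mul (C / 2)
        have := h2.add h3
        exact this.congr_deriv (by ring)
      exact ((hf' x (Ioo_subset_Icc_self hx)).mono Ioo_subset_Icc_self).sub
        (hp.hasDerivWithinAt.mono Ioo_subset_Icc_self)
    · intro x hx
      rw [hint] at hx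
      have := hlip x (Ioo_subset_Icc_self hx)
      linarith
  intro s hs
  have := hmono hs ⟨zero_le_one, le_rfl⟩ hs.2
  simp only [hφ, hf1] at this
  nlinarith [this]

set_option maxHeartbeats 1000000 in
/-- For a composition semigroup (ψ_t)_{t>0} of convex, monotone
increasing functions on [0,1] fixing 1, with 0 < ψ_t(0), ψ_t(s) < 1 on [0,1),
positive multiplicative left derivatives d t = ψ_t'(1) at 1, and ψ_1 twice
continuously differentiable on [0,1] with 0 < ψ_1'(1) < 1, the limit
χ(0) = lim_{t→∞} (1 − ψ_t(0))/ψ_t'(1) exists, is finite and strictly positive. -/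
theorem coalescence_stmt11 (ψ : ℝ → ℝ → ℝ) (d : ℝ → ℝ) (ψ₁' ψ₁'' : ℝ → ℝ)
    (hconv : ∀ t > 0, ConvexOn ℝ (Icc 0 1) (ψ t))
    (hmono : ∀ t > 0, MonotoneOn (ψ t) (Icc 0 1))
    (hmap : ∀ t > 0, MapsTo (ψ t) (Icc 0 1) (Icc 0 1))
    (h1 : ∀ t > 0, ψ t 1 = 1)
    (h0 : ∀ t > 0, 0 < ψ t 0)
    (hlt : ∀ t > 0, ∀ s ∈ Ico (0:ℝ) 1, ψ t s < 1)
    (hd : ∀ t > 0, HasDerivWithinAt (ψ t) (d t) (Iic 1) 1)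
    (hd0 : ∀ t > 0, 0 < d t)
    (hsemi : ∀ t > 0, ∀ h > 0, ∀ s ∈ Icc (0:ℝ) 1, ψ (t + h) s = ψ t (ψ h s))
    (hdmul : ∀ t > 0, ∀ h > 0, d (t + h) = d t * d h)
    (hψ₁' : ∀ s ∈ Icc (0:ℝ) 1, HasDerivWithinAt (ψ 1) (ψ₁' s) (Icc 0 1) s)
    (hψ₁'' : ∀ s ∈ Icc (0:ℝ) 1, HasDerivWithinAt ψ₁' (ψ₁'' s) (Icc 0 1) s)
    (hcont : ContinuousOn ψ₁'' (Icc 0 1))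
    (hd1 : d 1 = ψ₁' 1) (hsub : d 1 < 1) :
    ∃ χ0 : ℝ, 0 < χ0 ∧
      Tendsto (fun t => (1 - ψ t 0) / d t) atTop (𝓝 χ0) := by
  set a : ℝ → ℝ := fun t => (1 - ψ t 0) / d t with ha
  have hm0 : 0 < d 1 := hd0 1 one_pos
  set m : ℝ := d 1 with hmdef
  have hm1 : m < 1 := hsub
  have hzero : (0:ℝ) ∈ Icc (0:ℝ) 1 := ⟨le_rfl, zero_le_one⟩
  have tangent : ∀ t > 0, ∀ s ∈ Icc (0:ℝ) 1, 1 - d t * (1 - s) ≤ ψ t s :=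
    fun t ht => aux_tangent (ψ t) (d t) (hconv t ht) (h1 t ht) (hd t ht)
  have upos : ∀ t > 0, 0 < 1 - ψ t 0 := by
    intro t ht
    have := hlt t ht 0 ⟨le_rfl, one_pos⟩
    linarith
  have apos : ∀ t > 0, 0 < a t := fun t ht => div_pos (upos t ht) (hd0 t ht)
  have ub : ∀ t > 0, 1 - ψ t 0 ≤ d t := by
    intro t ht
    have := tangent t ht 0 hzero
    linarith
  -- antitonicity on (0, ∞)
  have anti : ∀ t1 t2 : ℝ, 0 < t1 → t1 ≤ t2 → a t2 ≤ a t1 := by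
    intro t1 t2 h1p h12
    rcases eq_or_lt_of_le h12 with rfl | hlt2
    · exact le_rfl
    have hh : 0 < t2 - t1 := by linarith
    have hsplit : ψ t2 0 = ψ (t2 - t1) (ψ t1 0) := by
      have := hsemi (t2 - t1) hh t1 h1p 0 hzero
      rwa [sub_add_cancel] at this
    have hs' : ψ t1 0 ∈ Icc (0:ℝ) 1 := hmap t1 h1p hzero
    have ht2 : 1 - ψ t2 0 ≤ d (t2 - t1) * (1 - ψ t1 0) := by
      have := tangent (t2 - t1) hh (ψ t1 0) hs'
      rw [← hsplit] at this
      linarith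
    have hdsplit : d t2 = d (t2 - t1) * d t1 := by
      have := hdmul (t2 - t1) hh t1 h1p
      rwa [sub_add_cancel] at this
    show (1 - ψ t2 0) / d t2 ≤ (1 - ψ t1 0) / d t1
    have hdh : 0 < d (t2 - t1) := hd0 _ hh
    have hd1' : 0 < d t1 := hd0 _ h1p
    rw [hdsplit, div_le_div_iff₀ (by positivity) hd1']
    nlinarith [upos t1 h1p]
  -- d at integer times
  have dnat : ∀ n : ℕ, d ((n:ℝ) + 1) = m ^ (n + 1) := by
    intro n
    induction n with
    | zero => simp [hmdef]
    | succ k ih =>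
      have hk : (0:ℝ) < (k:ℝ) + 1 := by positivity
      have hmul := hdmul ((k:ℝ) + 1) hk 1 one_pos
      push_cast
      rw [show (k:ℝ) + 1 + 1 = ((k:ℝ) + 1) + 1 by ring, hmul, ih, ← hmdef]
      ring
  -- quadratic bound on ψ 1
  obtain ⟨C, hC⟩ := isCompact_Icc.exists_bound_of_continuousOn hcont
  have hC0 : 0 ≤ C := le_trans (norm_nonneg _) (hC 1 ⟨zero_le_one, le_rfl⟩)
  have quad : ∀ s ∈ Icc (0:ℝ) 1, ψ 1 s ≤ 1 - m * (1 - s) + C / 2 * (1 - s) ^ 2 :=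
    aux_quad (ψ 1) ψ₁' ψ₁'' m C hψ₁' hψ₁'' hC hd1.symm (h1 1 one_pos)
  set K : ℝ := C / (2 * m) with hKdef
  have hK0 : 0 ≤ K := by positivity
  have hKm : K * m = C / 2 := by
    field_simp [hKdef]
    rw [hKdef]
    field_simp
  -- one-step recursion estimate
  have step : ∀ n : ℕ, a ((n:ℝ) + 1) * (1 - K * m ^ (n + 1)) ≤ a ((n:ℝ) + 1 + 1) := by
    intro n
    have ht : (0:ℝ) < (n:ℝ) + 1 := by positivity
    set t : ℝ := (n:ℝ) + 1 with htdef
    set u : ℝ := 1 - ψ t 0 with hudef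
    have hu0 : 0 < u := upos t ht
    have hule : u ≤ m ^ (n + 1) := by
      rw [← dnat n]; exact ub t ht
    have hsplit : ψ (t + 1) 0 = ψ 1 (ψ t 0) := by
      have := hsemi 1 one_pos t ht 0 hzero
      rwa [add_comm 1 t] at this
    have hq := quad (ψ t 0) (hmap t ht hzero)
    have hnum : m * u - C / 2 * u ^ 2 ≤ 1 - ψ (t + 1) 0 := by
      rw [hsplit]
      have h1u : 1 - ψ t 0 = u := rfl
      nlinarith [hq]
    have hdt1 : d (t + 1) = m ^ (n + 2) := by
      have := hdmul t ht 1 one_pos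
      rw [this, dnat n, ← hmdef]
      ring
    have hP : (0:ℝ) < m ^ (n + 1) := pow_pos hm0 _
    have hP2 : (0:ℝ) < m ^ (n + 2) := pow_pos hm0 _
    show (1 - ψ t 0) / d t * (1 - K * m ^ (n + 1)) ≤ (1 - ψ (t + 1) 0) / d (t + 1)
    rw [hdt1, ← hudef, show d t = m ^ (n + 1) from dnat n]
    rw [div_mul_eq_mul_div, div_le_div_iff₀ hP hP2]
    have hnum' : (m * u - C / 2 * u ^ 2) * m ^ (n + 1) ≤ (1 - ψ (t + 1) 0) * m ^ (n + 1) :=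
      mul_le_mul_of_nonneg_right hnum hP.le
    have hpow : m ^ (n + 2) = m ^ (n + 1) * m := pow_succ m (n + 1)
    have hsq : 0 ≤ C / 2 * (u * (m ^ (n + 1) - u)) :=
      mul_nonneg (by linarith) (mul_nonneg hu0.le (by linarith))
    have e1 : u * (1 - K * m ^ (n + 1)) * m ^ (n + 2)
        = (m * u - C / 2 * (u * m ^ (n + 1))) * m ^ (n + 1) := by
      rw [hpow]
      linear_combination (-(u * m ^ (n + 1) * m ^ (n + 1))) * hKm
    rw [e1]
    nlinarith [hnum', mul_nonneg hP.le hsq]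
  -- choose N with K * m^(N+1) < 1 - m
  have h1m : (0:ℝ) < 1 - m := by linarith
  obtain ⟨N, hN⟩ := exists_pow_lt_of_lt_one
    (show (0:ℝ) < (1 - m) / (K + 1) by exact div_pos h1m (by linarith)) hm1
  have hq1 : m ^ (N + 1) ≤ m ^ N := by
    rw [pow_succ]
    nlinarith [pow_pos hm0 N]
  have hNK : K * m ^ (N + 1) < 1 - m := by
    have h2 : (K + 1) * m ^ N < 1 - m := by
      have := mul_lt_mul_of_pos_left hN (show (0:ℝ) < K + 1 by linarith)
      rwa [mul_div_cancel₀ _ (show K + 1 ≠ 0 by positivity)] at this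
    nlinarith [pow_pos hm0 N, pow_pos hm0 (N + 1)]
  set q : ℝ := m ^ (N + 1) with hqdef
  have hq0 : 0 < q := pow_pos hm0 _
  have hAN0 : 0 < a ((N:ℝ) + 1) := apos _ (by positivity)
  -- main induction
  have main : ∀ n : ℕ,
      a ((N:ℝ) + 1) * (1 - K * (q - m ^ (N + n + 1)) / (1 - m)) ≤ a ((↑(N + n) : ℝ) + 1) := by
    intro n
    induction n with
    | zero =>
      simp [hqdef]
    | succ n ih =>
      have hx0 : (0:ℝ) < m ^ (N + n + 1) := pow_pos hm0 _
      have hxle : m ^ (N + n + 1) ≤ q := by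
        rw [hqdef]
        exact pow_le_pow_of_le_one hm0.le hm1.le (by omega)
      have hTn : 0 ≤ (q - m ^ (N + n + 1)) / (1 - m) :=
        div_nonneg (by linarith) h1m.le
      have hfac : 0 ≤ 1 - K * m ^ (N + n + 1) := by nlinarith
      have hs := step (N + n)
      have h2 : a ((N:ℝ) + 1) * ((1 - K * (q - m ^ (N + n + 1)) / (1 - m)) *
          (1 - K * m ^ (N + n + 1))) ≤ a ((↑(N + n) : ℝ) + 1) * (1 - K * m ^ (N + n + 1)) := by
        rw [← mul_assoc]
        exact mul_le_mul_of_nonneg_right ih hfac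
      have hid : K * (q - m ^ (N + (n + 1) + 1)) / (1 - m)
          = K * (q - m ^ (N + n + 1)) / (1 - m) + K * m ^ (N + n + 1) := by
        have hpw : m ^ (N + (n + 1) + 1) = m ^ (N + n + 1) * m := by
          rw [show N + (n + 1) + 1 = N + n + 1 + 1 from by omega, pow_succ]
        rw [hpw]
        field_simp
        ring
      have hcast : ((↑(N + (n + 1)) : ℝ) + 1) = (↑(N + n) : ℝ) + 1 + 1 := by push_cast; ring
      rw [hcast, hid]
      have hX0 : 0 ≤ K * (q - m ^ (N + n + 1)) / (1 - m) :=
        div_nonneg (mul_nonneg hK0 (by linarith)) h1m.le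
      have h3 : a ((N:ℝ) + 1) * (1 - (K * (q - m ^ (N + n + 1)) / (1 - m) + K * m ^ (N + n + 1)))
          ≤ a ((N:ℝ) + 1) * ((1 - K * (q - m ^ (N + n + 1)) / (1 - m)) *
            (1 - K * m ^ (N + n + 1))) := by
        have hnn : 0 ≤ a ((N:ℝ) + 1) * (K * (q - m ^ (N + n + 1)) / (1 - m)) *
            (K * m ^ (N + n + 1)) :=
          mul_nonneg (mul_nonneg hAN0.le hX0) (mul_nonneg hK0 hx0.le)
        nlinarith [hnn]
      calc a ((N:ℝ) + 1) * (1 - (K * (q - m ^ (N + n + 1)) / (1 - m) + K * m ^ (N + n + 1)))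
          ≤ _ := h3
        _ ≤ a ((↑(N + n) : ℝ) + 1) * (1 - K * m ^ (N + n + 1)) := h2
        _ ≤ a ((↑(N + n) : ℝ) + 1 + 1) := step (N + n)
  -- positive lower bound
  set c : ℝ := a ((N:ℝ) + 1) * (1 - K * q / (1 - m)) with hcdef
  have hc0 : 0 < c := by
    apply mul_pos hAN0
    rw [sub_pos]
    rw [div_lt_one h1m]
    exact hNK
  have hlow : ∀ n : ℕ, c ≤ a ((↑(N + n) : ℝ) + 1) := by
    intro n
    refine le_trans ?_ (main n)
    rw [hcdef]
    have hx0 : (0:ℝ) < m ^ (N + n + 1) := pow_pos hm0 _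
    have h4 : K * (q - m ^ (N + n + 1)) / (1 - m) ≤ K * q / (1 - m) := by
      rw [div_le_div_iff₀ h1m h1m]
      nlinarith [mul_nonneg (mul_nonneg hK0 hx0.le) h1m.le]
    have h5 : 1 - K * q / (1 - m) ≤ 1 - K * (q - m ^ (N + n + 1)) / (1 - m) := by linarith
    nlinarith [mul_le_mul_of_nonneg_left h5 hAN0.le]
  have clow : ∀ t : ℝ, 0 < t → c ≤ a t := by
    intro t ht
    have hle : t ≤ (↑(N + ⌈t⌉₊) : ℝ) + 1 := by
      have h1' : t ≤ (⌈t⌉₊ : ℝ) := Nat.le_ceil t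
      have h2' : ((⌈t⌉₊ : ℕ) : ℝ) ≤ ((N + ⌈t⌉₊ : ℕ) : ℝ) := by
        exact_mod_cast Nat.le_add_left _ _
      linarith
    exact le_trans (hlow ⌈t⌉₊) (anti t _ ht hle)
  -- conclude
  set g : ℝ → ℝ := fun t => a (max t 1) with hg
  have hg_anti : Antitone g := fun t1 t2 h =>
    anti (max t1 1) (max t2 1) (lt_of_lt_of_le one_pos (le_max_right _ _)) (max_le_max h le_rfl)
  have hbdd : BddBelow (range g) := by
    refine ⟨c, ?_⟩
    rintro x ⟨t, rfl⟩
    exact clow _ (lt_of_lt_of_le one_pos (le_max_right t 1))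
  have htend : Tendsto g atTop (𝓝 (⨅ t, g t)) := tendsto_atTop_ciInf hg_anti hbdd
  refine ⟨⨅ t, g t, ?_, ?_⟩
  · have : c ≤ ⨅ t, g t :=
      le_ciInf fun t => clow _ (lt_of_lt_of_le one_pos (le_max_right t 1))
    linarith
  · refine htend.congr' ?_
    filter_upwards [eventually_ge_atTop (1:ℝ)] with t ht
    rw [hg]
    simp only [max_eq_left ht]
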